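/- Let q = p^k with p prime and k ≥ 1. The number of dynamical-equivalence classes among the maps F_q → F_q of the form x ↦ a x^p + b, where a ∈ F_q^*, b ∈ F_q, and the norm Nm_{F_q/F_p}(a) = 1, is exactly 2; moreover, two such maps are dynamically equivalent if and only if either both or neither have a fixed point in F_q. -/

import Mathlib

/-- Two self-maps `f g : α → α` are dynamically equivalent if there is a bijection
`σ : α → α` with `σ⁻¹ ∘ g ∘ σ = f`. -/
def DynEquiv {α : Type*} (f g : α → α) : Prop :=
  ∃ σ : Equiv.Perm α, ∀ x, σ.symm (g (σ x)) = f x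

/-- The number of dynamical-equivalence classes represented by the elements of a set `S`
of self-maps. -/
noncomputable def numDynClasses {α : Type*} (S : Set (α → α)) : ℕ :=
  Nat.card (Quot (fun f g : S => DynEquiv f.1 g.1))

/-- The norm from `F_q` to `F_p` (with `q = p^k`): `x ↦ x^(1 + p + ⋯ + p^(k-1))`. -/
def fieldNorm {F : Type*} [Field F] (p k : ℕ) (x : F) : F :=
  x ^ (∑ i ∈ Finset.range k, p ^ i)

theorem dynEquiv_refl {α : Type*} (f : α → α) : DynEquiv f f :=
  ⟨Equiv.refl α, fun _ => rfl⟩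

theorem dynEquiv_symm {α : Type*} {f g : α → α} (h : DynEquiv f g) : DynEquiv g f := by
  obtain ⟨σ, hσ⟩ := h
  refine ⟨σ.symm, fun x => ?_⟩
  have h1 := hσ (σ.symm x)
  rw [Equiv.apply_symm_apply] at h1
  simp [← h1]

theorem dynEquiv_trans {α : Type*} {f g h : α → α} (h1 : DynEquiv f g) (h2 : DynEquiv g h) :
    DynEquiv f h := by
  obtain ⟨σ, hσ⟩ := h1
  obtain ⟨τ, hτ⟩ := h2
  refine ⟨σ.trans τ, fun x => ?_⟩
  simp only [Equiv.trans_apply, Equiv.symm_trans_apply]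
  rw [hτ, hσ]

theorem dynEquiv_fix {α : Type*} {f g : α → α} (h : DynEquiv f g) (hx : ∃ x, f x = x) :
    ∃ x, g x = x := by
  obtain ⟨σ, hσ⟩ := h
  obtain ⟨x, hx⟩ := hx
  refine ⟨σ x, ?_⟩
  have h1 := hσ x
  rw [hx] at h1
  calc g (σ x) = σ (σ.symm (g (σ x))) := (σ.apply_symm_apply _).symm
  _ = σ x := by rw [h1]

theorem charF {F : Type*} [Field F] [Fintype F] {p k : ℕ} [Fact p.Prime] (hk : 1 ≤ k)
    (hq : Fintype.card F = p ^ k) : CharP F p := by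
  obtain ⟨r, hr⟩ := CharP.exists F
  haveI := hr
  obtain ⟨n, hrp, hcard⟩ := FiniteField.card F r
  have hpr : p = r := by
    have hdvd : p ∣ r ^ (n : ℕ) := by
      rw [← hcard, hq]; exact dvd_pow_self p (by omega)
    exact (Nat.prime_dvd_prime_iff_eq Fact.out hrp).mp
      ((Fact.out : p.Prime).dvd_of_dvd_pow hdvd)
  subst hpr; exact hr

theorem geom_eq {p : ℕ} (hp : 1 ≤ p) (k : ℕ) :
    (p - 1) * (∑ i ∈ Finset.range k, p ^ i) = p ^ k - 1 := by
  have h := geom_sum_mul (p : ℤ) k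
  have h1 : (1 : ℕ) ≤ p ^ k := Nat.one_le_pow _ _ (by omega)
  zify [hp, h1]
  push_cast at h ⊢
  linarith

theorem exists_pow_eq {F : Type*} [Field F] [Fintype F] {p k : ℕ} [Fact p.Prime] (hk : 1 ≤ k)
    (hq : Fintype.card F = p ^ k) (a : Fˣ)
    (ha : (a : F) ^ (∑ i ∈ Finset.range k, p ^ i) = 1) :
    ∃ u : Fˣ, (u : F) ^ (p - 1) = (a : F) := by
  classical
  set m := ∑ i ∈ Finset.range k, p ^ i with hm
  have ham : a ^ m = 1 := Units.ext (by push_cast; exact ha)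
  obtain ⟨g, hg⟩ := IsCyclic.exists_generator (α := Fˣ)
  obtain ⟨i, hi⟩ : ∃ i : ℕ, g ^ i = a := by
    have := hg a
    rwa [← mem_powers_iff_mem_zpowers, Submonoid.mem_powers_iff] at this
  have hord : orderOf g = Nat.card Fˣ := orderOf_eq_card_of_forall_mem_zpowers hg
  have hcard : Nat.card Fˣ = (p - 1) * m := by
    rw [Nat.card_eq_fintype_card, Fintype.card_units, hq,
      geom_eq (Fact.out : p.Prime).one_lt.le]
  have hdvd : (p - 1) * m ∣ i * m := by
    have hone : g ^ (i * m) = 1 := by rw [pow_mul, hi, ham]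
    rw [← hcard, ← hord]
    exact orderOf_dvd_of_pow_eq_one hone
  have hm0 : 0 < m := by
    have : p ^ 0 ≤ m := Finset.single_le_sum (f := fun i => p ^ i)
      (fun i _ => Nat.zero_le _) (Finset.mem_range.mpr (by omega))
    simpa using lt_of_lt_of_le one_pos (by simpa using this)
  have hpd : (p - 1) ∣ i := (Nat.mul_dvd_mul_iff_right hm0).mp hdvd
  obtain ⟨j, hj⟩ := hpd
  refine ⟨g ^ j, ?_⟩
  have : (g ^ j) ^ (p - 1) = a := by
    rw [← pow_mul, mul_comm j (p - 1), ← hj, hi]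
  exact_mod_cast congrArg Units.val this

theorem affine_conj {F : Type*} [Field F] (p : ℕ) [Fact p.Prime] [CharP F p]
    (a a' b b' u v : F) (hu : u ≠ 0)
    (hau : a' * u ^ p = a * u) (hv : a' * v ^ p + b' - v = u * b) :
    DynEquiv (fun x => a * x ^ p + b) (fun x => a' * x ^ p + b') := by
  refine ⟨⟨fun x => u * x + v, fun y => u⁻¹ * (y - v), fun x => by field_simp; ring,
    fun y => by field_simp; ring⟩, fun x => ?_⟩
  show u⁻¹ * ((a' * (u * x + v) ^ p + b') - v) = a * x ^ p + b
  have key : (a' * (u * x + v) ^ p + b') - v = u * (a * x ^ p + b) := by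
    rw [add_pow_char, mul_pow]
    linear_combination x ^ p * hau + hv
  rw [key, inv_mul_cancel_left₀ hu]

theorem key_equiv {F : Type*} [Field F] [Fintype F] {p k : ℕ} [Fact p.Prime] (hk : 1 ≤ k)
    (hq : Fintype.card F = p ^ k) (a a' : Fˣ) (b b' : F)
    (ha : (a : F) ^ (∑ i ∈ Finset.range k, p ^ i) = 1)
    (ha' : (a' : F) ^ (∑ i ∈ Finset.range k, p ^ i) = 1)
    (hfp : (∃ x : F, (a : F) * x ^ p + b = x) ↔ (∃ x : F, (a' : F) * x ^ p + b' = x)) :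
    DynEquiv (fun x : F => (a : F) * x ^ p + b) (fun x : F => (a' : F) * x ^ p + b') := by
  classical
  haveI : CharP F p := charF hk hq
  have hp2 : 2 ≤ p := (Fact.out : p.Prime).two_le
  set m := ∑ i ∈ Finset.range k, p ^ i with hm
  have hnorm : ((a * a'⁻¹ : Fˣ) : F) ^ m = 1 := by
    push_cast
    rw [mul_pow, ha, inv_pow, ha']
    simp
  obtain ⟨u, hu⟩ := exists_pow_eq hk hq (a * a'⁻¹) hnorm
  have hu0 : (u : F) ≠ 0 := u.ne_zero
  have hau : (a' : F) * (u : F) ^ p = (a : F) * (u : F) := by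
    have hps : p = (p - 1) + 1 := by omega
    have hup : (u : F) ^ p = (u : F) ^ (p - 1) * (u : F) := by
      conv_lhs => rw [hps]
      rw [pow_succ]
    rw [hup, hu]
    push_cast
    field_simp
  by_cases hfix : ∃ x : F, (a : F) * x ^ p + b = x
  · obtain ⟨x0, hx0⟩ := hfix
    obtain ⟨x0', hx0'⟩ := hfp.mp ⟨x0, hx0⟩
    refine affine_conj p (a : F) (a' : F) b b' u (x0' - u * x0) hu0 hau ?_
    have hvp : (x0' - (u : F) * x0) ^ p = x0' ^ p - (u : F) ^ p * x0 ^ p := by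
      rw [sub_pow_char, mul_pow]
    rw [hvp]
    linear_combination hx0' - (u : F) * hx0 - x0 ^ p * hau
  · have hfix' : ¬∃ x : F, (a' : F) * x ^ p + b' = x := fun h => hfix (hfp.mpr h)
    set L : F →+ F := AddMonoidHom.mk' (fun x => (a' : F) * x ^ p - x)
      (fun x y => by rw [add_pow_char]; ring) with hL
    set H := L.range with hH
    have hLapp : ∀ x : F, L x = (a' : F) * x ^ p - x := fun x => rfl
    have hLu : ∀ y : F, L ((u : F) * y) = (u : F) * ((a : F) * y ^ p - y) := by
      intro y
      rw [hLapp, mul_pow]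
      linear_combination y ^ p * hau
    have hb' : b' ∉ H := by
      intro hmem
      apply hfix'
      obtain ⟨x, hx⟩ := (AddSubgroup.neg_mem_iff H).mpr hmem
      rw [hLapp] at hx
      exact ⟨x, by linear_combination hx⟩
    have hub : (u : F) * b ∉ H := by
      intro hmem
      apply hfix
      obtain ⟨x, hx⟩ := (AddSubgroup.neg_mem_iff H).mpr hmem
      have hx2 : L ((u : F) * ((u : F)⁻¹ * x)) = -((u : F) * b) := by
        rw [mul_inv_cancel_left₀ hu0]; exact hx
      rw [hLu] at hx2
      refine ⟨(u : F)⁻¹ * x, ?_⟩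
      have h3 := mul_left_cancel₀ hu0 (hx2.trans (by ring : -((u : F) * b) = (u : F) * (-b)))
      linear_combination h3
    -- cardinality of the kernel
    have hker : Nat.card L.ker ≤ p := by
      set P : Polynomial F := Polynomial.C (a' : F) * Polynomial.X ^ p - Polynomial.X with hP
      have hdegl : (Polynomial.C (a' : F) * Polynomial.X ^ p).natDegree = p := by
        rw [Polynomial.natDegree_C_mul a'.ne_zero, Polynomial.natDegree_X_pow]
      have hPdeg : P.natDegree = p := by
        rw [hP, Polynomial.natDegree_sub_eq_left_of_natDegree_lt]
        · exact hdegl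
        · rw [hdegl, Polynomial.natDegree_X]; omega
      have hP0 : P ≠ 0 := by
        intro h
        rw [h, Polynomial.natDegree_zero] at hPdeg
        omega
      have hsub : (L.ker : Set F) ⊆ ↑P.roots.toFinset := by
        intro x hx
        have hx' : L x = 0 := hx
        rw [hLapp] at hx'
        simp only [Multiset.mem_toFinset, Finset.coe_sort_coe, Finset.mem_coe]
        rw [Polynomial.mem_roots hP0]
        simp [Polynomial.IsRoot, hP, hx']
      calc Nat.card L.ker = (L.ker : Set F).ncard := Nat.card_coe_set_eq _
      _ ≤ (↑P.roots.toFinset : Set F).ncard :=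
          Set.ncard_le_ncard hsub (P.roots.toFinset : Set F).toFinite
      _ = P.roots.toFinset.card := Set.ncard_coe_finset _
      _ ≤ Multiset.card P.roots := Multiset.toFinset_card_le _
      _ ≤ P.natDegree := Polynomial.card_roots' P
      _ = p := hPdeg
    have hcardF : Nat.card F = p ^ k := by rw [Nat.card_eq_fintype_card, hq]
    have hiso : Nat.card (F ⧸ L.ker) = Nat.card H :=
      Nat.card_congr (QuotientAddGroup.quotientKerEquivRange L).toEquiv
    have hprod : Nat.card (F ⧸ L.ker) * Nat.card L.ker = p ^ k := by
      rw [← hcardF]; exact (AddSubgroup.card_eq_card_quotient_mul_card_addSubgroup L.ker).symm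
    have hHne : Nat.card H ≠ p ^ k := by
      intro h
      apply hb'
      have : H = ⊤ := AddSubgroup.eq_top_of_card_eq _ (by rw [h, hcardF])
      rw [this]; trivial
    have hker1 : Nat.card L.ker ≠ 1 := by
      intro h1
      apply hHne
      rw [← hiso, ← hprod, h1, mul_one]
    have hkerpos : 0 < Nat.card L.ker := Nat.card_pos
    have hkerdvd : Nat.card L.ker ∣ p ^ k := ⟨Nat.card (F ⧸ L.ker), by rw [← hprod]; ring⟩
    have hkerp : Nat.card L.ker = p := by
      obtain ⟨j, hj, hje⟩ := (Nat.dvd_prime_pow Fact.out).mp hkerdvd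
      rw [hje] at hker hker1 ⊢
      have hj1 : 1 ≤ j := by
        by_contra h
        have : j = 0 := by omega
        rw [this] at hker1
        simp at hker1
      have hge : p ≤ p ^ j := by
        calc p = p ^ 1 := (pow_one p).symm
        _ ≤ p ^ j := Nat.pow_le_pow_right (by omega) hj1
      omega
    -- cardinality of the quotient F ⧸ H
    have hHcard : Nat.card H * p = p ^ k := by
      rw [← hiso, ← hprod, hkerp]
    have hprod2 : Nat.card (F ⧸ H) * Nat.card H = p ^ k := by
      rw [← hcardF]
      exact (AddSubgroup.card_eq_card_quotient_mul_card_addSubgroup H).symm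
    have hHpos : 0 < Nat.card H := Nat.card_pos
    have hQcard : Nat.card (F ⧸ H) = p := by
      have h1 : Nat.card (F ⧸ H) * Nat.card H = p * Nat.card H := by
        rw [hprod2, mul_comm p _, hHcard]
      exact Nat.eq_of_mul_eq_mul_right hHpos h1
    set g0 : F ⧸ H := QuotientAddGroup.mk ((u : F) * b) with hg0
    have hgne : g0 ≠ 0 := by
      rw [hg0]
      intro h
      exact hub ((QuotientAddGroup.eq_zero_iff _).mp h)
    have horder : addOrderOf g0 = p := by
      have hdvd : addOrderOf g0 ∣ p := by rw [← hQcard]; exact addOrderOf_dvd_natCard g0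
      have h1 : addOrderOf g0 ≠ 1 := fun h => hgne (AddMonoid.addOrderOf_eq_one_iff.mp h)
      rcases (Nat.Prime.eq_one_or_self_of_dvd Fact.out _ hdvd) with h | h
      · exact absurd h h1
      · exact h
    have htop : AddSubgroup.zmultiples g0 = ⊤ :=
      AddSubgroup.eq_top_of_card_eq _ (by rw [Nat.card_zmultiples, horder, hQcard])
    have hmem : (QuotientAddGroup.mk b' : F ⧸ H) ∈ AddSubgroup.zmultiples g0 := by
      rw [htop]; trivial
    obtain ⟨n, hn⟩ := AddSubgroup.mem_zmultiples_iff.mp hmem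
    set c : F := ((n : ℤ) : F) with hc
    have hcp : c ^ p = c := by
      have h1 : c = (ZMod.castHom dvd_rfl F) ((n : ZMod p)) := by
        rw [hc, map_intCast]
      rw [h1, ← map_pow, ZMod.pow_card]
    have hcb : c * ((u : F) * b) - b' ∈ H := by
      have h1 : (QuotientAddGroup.mk (c * ((u : F) * b)) : F ⧸ H) = QuotientAddGroup.mk b' := by
        rw [← hn]
        have h2 : c * ((u : F) * b) = n • ((u : F) * b) := by rw [zsmul_eq_mul, hc]
        rw [h2, ← QuotientAddGroup.mk_zsmul]
      exact (QuotientAddGroup.eq_iff_sub_mem).mp h1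
    have hc0 : c ≠ 0 := by
      intro h
      apply hb'
      rw [h] at hcb
      have h2 : -b' ∈ H := by simpa using hcb
      exact (AddSubgroup.neg_mem_iff H).mp h2
    obtain ⟨v, hv⟩ := AddMonoidHom.mem_range.mp hcb
    have hcu0 : c * (u : F) ≠ 0 := mul_ne_zero hc0 hu0
    have hau' : (a' : F) * (c * (u : F)) ^ p = (a : F) * (c * (u : F)) := by
      rw [mul_pow, hcp]
      linear_combination c * hau
    refine affine_conj p (a : F) (a' : F) b b' (c * (u : F)) v hcu0 hau' ?_
    rw [hLapp] at hv
    linear_combination hv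

theorem stmt8 {F : Type*} [Field F] [Fintype F] (p k : ℕ) [Fact p.Prime] (hk : 1 ≤ k)
    (hq : Fintype.card F = p ^ k) :
    numDynClasses {f : F → F | ∃ (a : Fˣ) (b : F), fieldNorm p k (a : F) = 1 ∧
        f = fun x => (a : F) * x ^ p + b} = 2 ∧
    ∀ (a a' : Fˣ) (b b' : F), fieldNorm p k (a : F) = 1 → fieldNorm p k (a' : F) = 1 →
      (DynEquiv (fun x : F => (a : F) * x ^ p + b) (fun x : F => (a' : F) * x ^ p + b') ↔
        ((∃ x : F, (a : F) * x ^ p + b = x) ↔ (∃ x : F, (a' : F) * x ^ p + b' = x))) := by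
  classical
  haveI : CharP F p := charF hk hq
  have hp0 : p ≠ 0 := (Fact.out : p.Prime).ne_zero
  set S : Set (F → F) := {f : F → F | ∃ (a : Fˣ) (b : F), fieldNorm p k (a : F) = 1 ∧
      f = fun x => (a : F) * x ^ p + b} with hS
  have hnorm1 : fieldNorm p k ((1 : Fˣ) : F) = 1 := by simp [fieldNorm]
  have hmain : ∀ (a a' : Fˣ) (b b' : F), fieldNorm p k (a : F) = 1 → fieldNorm p k (a' : F) = 1 →
      (DynEquiv (fun x : F => (a : F) * x ^ p + b) (fun x : F => (a' : F) * x ^ p + b') ↔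
        ((∃ x : F, (a : F) * x ^ p + b = x) ↔ (∃ x : F, (a' : F) * x ^ p + b' = x))) := by
    intro a a' b b' ha ha'
    constructor
    · intro hde
      exact ⟨fun h => dynEquiv_fix hde h, fun h => dynEquiv_fix (dynEquiv_symm hde) h⟩
    · intro hfp
      exact key_equiv hk hq a a' b b' ha ha' hfp
  refine ⟨?_, hmain⟩
  -- construct a map with no fixed point
  obtain ⟨β, hβ⟩ : ∃ β : F, ∀ x : F, x - x ^ p ≠ β := by
    have hni : ¬Function.Injective (fun x : F => x - x ^ p) := by
      intro h
      have h01 : (0 : F) = 1 := h (by simp [zero_pow hp0])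
      exact zero_ne_one h01
    have hns : ¬Function.Surjective (fun x : F => x - x ^ p) := by
      intro h
      exact hni (Finite.injective_iff_surjective.mpr h)
    rw [Function.Surjective] at hns
    push_neg at hns
    obtain ⟨β, hβ⟩ := hns
    exact ⟨β, fun x => hβ x⟩
  set f0 : F → F := fun x => ((1 : Fˣ) : F) * x ^ p + 0 with hf0
  set f1 : F → F := fun x => ((1 : Fˣ) : F) * x ^ p + β with hf1
  have hf0S : f0 ∈ S := ⟨1, 0, hnorm1, rfl⟩
  have hf1S : f1 ∈ S := ⟨1, β, hnorm1, rfl⟩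
  have hf0fix : ∃ x : F, ((1 : Fˣ) : F) * x ^ p + 0 = x := ⟨0, by simp [zero_pow hp0]⟩
  have hf1fix : ¬∃ x : F, ((1 : Fˣ) : F) * x ^ p + β = x := by
    rintro ⟨x, hx⟩
    apply hβ x
    simp only [Units.val_one, one_mul] at hx
    linear_combination -hx
  have hequiv : Equivalence (fun f g : S => DynEquiv f.1 g.1) :=
    ⟨fun f => dynEquiv_refl f.1, fun h => dynEquiv_symm h, fun h1 h2 => dynEquiv_trans h1 h2⟩
  rw [numDynClasses]
  apply Nat.card_eq_two_iff.mpr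
  refine ⟨Quot.mk _ ⟨f0, hf0S⟩, Quot.mk _ ⟨f1, hf1S⟩, ?_, ?_⟩
  · intro h
    have hrel : DynEquiv f0 f1 := hequiv.eqvGen_iff.mp (Quot.eqvGen_exact h)
    exact hf1fix (dynEquiv_fix hrel hf0fix)
  · apply Set.eq_univ_of_forall
    intro q
    induction q using Quot.ind with
    | _ f =>
      obtain ⟨fval, a, b, ha, hfe⟩ := f
      subst hfe
      by_cases hfix : ∃ x : F, (a : F) * x ^ p + b = x
      · have heq : Quot.mk (fun f g : S => DynEquiv f.1 g.1)
            ⟨fun x => (a : F) * x ^ p + b, ⟨a, b, ha, rfl⟩⟩ = Quot.mk _ ⟨f0, hf0S⟩ :=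
          Quot.sound (key_equiv hk hq a 1 b 0 ha hnorm1 (iff_of_true hfix hf0fix))
        exact Set.mem_insert_iff.mpr (Or.inl heq)
      · have heq : Quot.mk (fun f g : S => DynEquiv f.1 g.1)
            ⟨fun x => (a : F) * x ^ p + b, ⟨a, b, ha, rfl⟩⟩ = Quot.mk _ ⟨f1, hf1S⟩ :=
          Quot.sound (key_equiv hk hq a 1 b β ha hnorm1 (iff_of_false hfix hf1fix))
        exact Set.mem_insert_iff.mpr (Or.inr (Set.mem_singleton_iff.mpr heq))
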